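/- For every integer d ≥ 2 and every integer k with d-1 ≤ k ≤ d(d-1)/2, there exists a configuration realizing exactly k, i.e. there exist points z₁,...,z_d in the complex plane with strictly increasing real parts and pairwise distinct imaginary parts, together with for each j = 2,...,d-1 a vertical ray (a cut) emanating from z_j going either up or down, such that the number of pairs (i,j), i < j, for which the open straight segment from z_i to z_j meets none of the cuts, is exactly k. -/

import Mathlib

open Complex Set

set_option maxHeartbeats 1600000

/-- The vertical ray (cut) at point `p`, going up if `b = true`, down otherwise. -/
def cutRay (p : ℂ) (b : Bool) : Set ℂ :=
  {w : ℂ | ∃ t : ℝ, 0 < t ∧ w = p + Complex.I * (if b then (t : ℂ) else -(t : ℂ))}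

/-- The union of the cuts of a chopped vertical strip: one vertical ray at each
interior node `z j`, `j = 2, ..., d-1` (in `Fin d` indexing: `0 < j < d - 1`). -/
def cutSet (d : ℕ) (z : Fin d → ℂ) (dir : Fin d → Bool) : Set ℂ :=
  ⋃ j ∈ {j : Fin d | (j : ℕ) ≠ 0 ∧ (j : ℕ) ≠ d - 1}, cutRay (z j) (dir j)

/-- The pair `(i, j)` is visible if the open segment from `z i` to `z j`
meets none of the cuts. -/
def Visible (d : ℕ) (z : Fin d → ℂ) (dir : Fin d → Bool) (i j : Fin d) : Prop :=
  openSegment ℝ (z i) (z j) ∩ cutSet d z dir = ∅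

/-- The number of visible pairs `(i, j)`, `i < j`, of a chopped vertical strip. -/
noncomputable def visibleCount (d : ℕ) (z : Fin d → ℂ) (dir : Fin d → Bool) : ℕ :=
  Nat.card {p : Fin d × Fin d // p.1 < p.2 ∧ Visible d z dir p.1 p.2}

/-! ### Auxiliary lemmas -/

lemma mem_cutRay_true' {p w : ℂ} : w ∈ cutRay p true ↔ w.re = p.re ∧ p.im < w.im := by
  constructor
  · rintro ⟨t, ht, rfl⟩
    constructor
    · simp
    · simp; linarith
  · rintro ⟨h1, h2⟩
    refine ⟨w.im - p.im, by linarith, ?_⟩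
    apply Complex.ext <;> simp [h1]

lemma re_mem_openSegment' {a b w : ℂ} (hab : a.re < b.re) (hw : w ∈ openSegment ℝ a b) :
    a.re < w.re ∧ w.re < b.re := by
  rw [openSegment_eq_image] at hw
  obtain ⟨t, ⟨ht0, ht1⟩, rfl⟩ := hw
  simp [Complex.real_smul]
  constructor <;> nlinarith

lemma inter_nonempty_iff' {a b p : ℂ} (h1 : a.re < p.re) (h2 : p.re < b.re) :
    (openSegment ℝ a b ∩ cutRay p true).Nonempty ↔
      p.im * (b.re - a.re) < a.im * (b.re - p.re) + b.im * (p.re - a.re) := by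
  have hba : (0:ℝ) < b.re - a.re := by linarith
  constructor
  · rintro ⟨w, hw, hray⟩
    rw [mem_cutRay_true'] at hray
    rw [openSegment_eq_image] at hw
    obtain ⟨t, ⟨ht0, ht1⟩, rfl⟩ := hw
    simp [Complex.real_smul] at hray
    obtain ⟨hre, him⟩ := hray
    have ht' : t * (b.re - a.re) = p.re - a.re := by linear_combination hre
    have hE : ((1-t)*a.im + t*b.im - p.im) * (b.re - a.re)
        = a.im*(b.re-p.re) + b.im*(p.re-a.re) - p.im*(b.re-a.re) := by
      linear_combination (b.im - a.im) * ht'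
    nlinarith [hE, him, hba]
  · intro h
    set t : ℝ := (p.re - a.re) / (b.re - a.re) with htdef
    have ht' : t * (b.re - a.re) = p.re - a.re := div_mul_cancel₀ _ (by linarith)
    have ht0 : 0 < t := div_pos (by linarith) hba
    have ht1 : t < 1 := (div_lt_one hba).2 (by linarith)
    have hE : ((1-t)*a.im + t*b.im - p.im) * (b.re - a.re)
        = a.im*(b.re-p.re) + b.im*(p.re-a.re) - p.im*(b.re-a.re) := by
      linear_combination (b.im - a.im) * ht'
    refine ⟨(1-t) • a + t • b, ?_, ?_⟩
    · rw [openSegment_eq_image]; exact ⟨t, ⟨ht0, ht1⟩, rfl⟩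
    · rw [mem_cutRay_true']
      constructor
      · simp [Complex.real_smul]; linear_combination ht'
      · simp [Complex.real_smul]; nlinarith [hE, h, hba]

lemma visible_iff_forall' {d : ℕ} (z : Fin d → ℂ) (hre : ∀ a : Fin d, (z a).re = (a.val : ℝ))
    {i j : Fin d} (hij : i.val < j.val) :
    Visible d z (fun _ => true) i j ↔ ∀ q : Fin d, i.val < q.val → q.val < j.val →
      (z i).im * ((j.val:ℝ) - (q.val:ℝ)) + (z j).im * ((q.val:ℝ) - (i.val:ℝ))
        ≤ (z q).im * ((j.val:ℝ) - (i.val:ℝ)) := by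
  constructor
  · intro h q hiq hqj
    by_contra hlt
    push_neg at hlt
    have h1 : (z i).re < (z q).re := by rw [hre, hre]; exact_mod_cast hiq
    have h2 : (z q).re < (z j).re := by rw [hre, hre]; exact_mod_cast hqj
    obtain ⟨w, hws, hwr⟩ := (inter_nonempty_iff' h1 h2).2 (by
      rw [hre i, hre q, hre j]
      linarith)
    have hmem : w ∈ cutSet d z (fun _ => true) := by
      refine Set.mem_biUnion ?_ hwr
      refine ⟨by omega, ?_⟩
      have := j.isLt
      omega
    exact (Set.eq_empty_iff_forall_notMem.1 h w) ⟨hws, hmem⟩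
  · intro h
    rw [Visible, Set.eq_empty_iff_forall_notMem]
    rintro w ⟨hws, hwc⟩
    obtain ⟨q, hq, hwq⟩ : ∃ q : Fin d, (q.val ≠ 0 ∧ q.val ≠ d-1) ∧ w ∈ cutRay (z q) true := by
      simpa [cutSet] using hwc
    have hori : (z i).re < (z j).re := by rw [hre, hre]; exact_mod_cast hij
    have hwre := re_mem_openSegment' hori hws
    rw [mem_cutRay_true'] at hwq
    have hiq : i.val < q.val := by
      have h' := hwre.1; rw [hwq.1, hre, hre] at h'; exact_mod_cast h'
    have hqj : q.val < j.val := by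
      have h' := hwre.2; rw [hwq.1, hre, hre] at h'; exact_mod_cast h'
    have hio := h q hiq hqj
    have h1 : (z i).re < (z q).re := by rw [hre, hre]; exact_mod_cast hiq
    have h2 : (z q).re < (z j).re := by rw [hre, hre]; exact_mod_cast hqj
    have hne : (openSegment ℝ (z i) (z j) ∩ cutRay (z q) true).Nonempty :=
      ⟨w, hws, mem_cutRay_true'.2 hwq⟩
    have := (inter_nonempty_iff' h1 h2).1 hne
    rw [hre i, hre q, hre j] at this
    linarith

noncomputable def yy (m c : ℕ) (K : ℝ) (i : ℕ) : ℝ :=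
  if i < m then -(i:ℝ)^2 else -(m:ℝ)^2 + ((m:ℝ) - (c:ℝ) + 3/2) + K * ((i:ℝ) - (m:ℝ))^2

noncomputable def zfun (d m c : ℕ) : Fin d → ℂ :=
  fun a => (a.val : ℝ) + (yy m c ((d:ℝ)^2+(d:ℝ)+2) a.val) * Complex.I

lemma zfun_re (d m c : ℕ) (a : Fin d) : (zfun d m c a).re = (a.val : ℝ) := by
  simp [zfun]

lemma zfun_im (d m c : ℕ) (a : Fin d) :
    (zfun d m c a).im = yy m c ((d:ℝ)^2+(d:ℝ)+2) a.val := by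
  simp [zfun]

def Qn (m c a b : ℕ) : Prop :=
  b < m ∨ (b = m ∧ (a+1 < c ∨ a+1 = m)) ∨ (m ≤ a ∧ b = a+1)

instance (m c a b : ℕ) : Decidable (Qn m c a b) := by unfold Qn; infer_instance

lemma vis_iff_Q (d m c : ℕ) (hd : 2 ≤ d) (hm1 : 1 ≤ m) (hmd : m + 1 ≤ d)
    (hc1 : 1 ≤ c) (hcm : c ≤ m) (i j : Fin d) (hij : i.val < j.val) :
    Visible d (zfun d m c) (fun _ => true) i j ↔ Qn m c i.val j.val := by
  have him : ∀ a : Fin d, a.val < m → (zfun d m c a).im = -(a.val:ℝ)^2 := by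
    intro a ha; rw [zfun_im, yy, if_pos ha]
  have him2 : ∀ a : Fin d, ¬ (a.val < m) → (zfun d m c a).im
      = -(m:ℝ)^2 + ((m:ℝ) - (c:ℝ) + 3/2) + ((d:ℝ)^2+(d:ℝ)+2) * ((a.val:ℝ) - (m:ℝ))^2 := by
    intro a ha; rw [zfun_im, yy, if_neg ha]
  rw [visible_iff_forall' (zfun d m c) (zfun_re d m c) hij]
  constructor
  · intro hall
    by_cases h1 : j.val < m
    · exact Or.inl h1
    by_cases h2 : j.val = m
    · by_cases h3 : i.val + 1 < c ∨ i.val + 1 = m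
      · exact Or.inr (Or.inl ⟨h2, h3⟩)
      · exfalso
        have hc' : c ≤ i.val + 1 := by omega
        have hm' : i.val + 2 ≤ m := by omega
        have hq : m - 1 < d := by omega
        have hspec := hall ⟨m-1, hq⟩ (show i.val < m-1 by omega) (show m-1 < j.val by omega)
        rw [him i (by omega), him ⟨m-1, hq⟩ (show m-1 < m by omega),
          him2 j (by omega)] at hspec
        have e1 : ((j.val:ℝ)) = (m:ℝ) := by exact_mod_cast h2
        have e2 : (((⟨m-1, hq⟩ : Fin d).val : ℕ) : ℝ) = (m:ℝ) - 1 := by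
          show ((m - 1 : ℕ) : ℝ) = (m:ℝ) - 1
          rw [Nat.cast_sub (show 1 ≤ m by omega)]
          norm_num
        rw [e1, e2] at hspec
        have c1 : (c:ℝ) ≤ (i.val:ℝ) + 1 := by exact_mod_cast hc'
        have c2 : (i.val:ℝ) + 2 ≤ (m:ℝ) := by exact_mod_cast hm'
        nlinarith [hspec, mul_nonneg (sub_nonneg.2 c2) (sub_nonneg.2 c1)]
    · by_cases h4 : i.val < m
      · exfalso
        have hq : m < d := by omega
        have hmj : m < j.val := by omega
        have hspec := hall ⟨m, hq⟩ (show i.val < m from h4) (show m < j.val from hmj)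
        rw [him i h4, him2 ⟨m, hq⟩ (show ¬ (m < m) by omega), him2 j (by omega)] at hspec
        have e2 : (((⟨m, hq⟩ : Fin d).val : ℕ) : ℝ) = (m:ℝ) := rfl
        rw [e2] at hspec
        have c1 : (i.val:ℝ) + 1 ≤ m := by exact_mod_cast h4
        have c2 : (m:ℝ) + 1 ≤ j.val := by exact_mod_cast hmj
        have c3 : (1:ℝ) ≤ c := by exact_mod_cast hc1
        have c4 : (m:ℝ) + 1 ≤ d := by exact_mod_cast hmd
        have ha : (0:ℝ) ≤ (i.val:ℝ) := Nat.cast_nonneg _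
        have hprod : (1:ℝ) ≤ ((j.val:ℝ)-(m:ℝ))*((m:ℝ)-(i.val:ℝ)) := by nlinarith
        have hKpos : (0:ℝ) ≤ (d:ℝ)^2+(d:ℝ)+2 := by positivity
        have hK1 : ((d:ℝ)^2+(d:ℝ)+2) ≤ ((d:ℝ)^2+(d:ℝ)+2) * (((j.val:ℝ)-(m:ℝ))*((m:ℝ)-(i.val:ℝ))) :=
          le_mul_of_one_le_right hKpos hprod
        have hi2 : (i.val:ℝ)^2 ≤ (m:ℝ)^2 := by nlinarith
        have hbr : (0:ℝ) < (m:ℝ)^2 - (i.val:ℝ)^2 - ((m:ℝ) - (c:ℝ) + 3/2)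
            + ((d:ℝ)^2+(d:ℝ)+2) * (((j.val:ℝ)-(m:ℝ))*((m:ℝ)-(i.val:ℝ))) := by
          have hd2 : (0:ℝ) ≤ (d:ℝ)^2 := sq_nonneg _
          linarith
        have hid : (-(i.val:ℝ)^2) * ((j.val:ℝ)-(m:ℝ))
              + (-(m:ℝ)^2 + ((m:ℝ)-(c:ℝ)+3/2) + ((d:ℝ)^2+(d:ℝ)+2)*((j.val:ℝ)-(m:ℝ))^2) * ((m:ℝ)-(i.val:ℝ))
              - (-(m:ℝ)^2 + ((m:ℝ)-(c:ℝ)+3/2)) * ((j.val:ℝ)-(i.val:ℝ))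
            = ((j.val:ℝ)-(m:ℝ)) * ((m:ℝ)^2 - (i.val:ℝ)^2 - ((m:ℝ)-(c:ℝ)+3/2)
              + ((d:ℝ)^2+(d:ℝ)+2) * (((j.val:ℝ)-(m:ℝ))*((m:ℝ)-(i.val:ℝ)))) := by ring
        linarith [hspec, hid, mul_pos (show (0:ℝ) < (j.val:ℝ)-(m:ℝ) by linarith) hbr]
      · by_cases h5 : j.val = i.val + 1
        · exact Or.inr (Or.inr ⟨by omega, h5⟩)
        · exfalso
          have hq : i.val + 1 < d := by have := j.isLt; omega
          have hspec := hall ⟨i.val+1, hq⟩ (show i.val < i.val+1 by omega)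
            (show i.val+1 < j.val by omega)
          rw [him2 i (by omega), him2 ⟨i.val+1, hq⟩ (show ¬ (i.val+1 < m) by omega),
            him2 j (by omega)] at hspec
          have e2 : (((⟨i.val+1, hq⟩ : Fin d).val : ℕ) : ℝ) = (i.val:ℝ) + 1 := by
            push_cast
            ring
          rw [e2] at hspec
          have c2 : (i.val:ℝ) + 2 ≤ (j.val:ℝ) := by exact_mod_cast (by omega : i.val + 2 ≤ j.val)
          have hKpos : (0:ℝ) < (d:ℝ)^2+(d:ℝ)+2 := by positivity
          have hid : (-(m:ℝ)^2 + ((m:ℝ)-(c:ℝ)+3/2) + ((d:ℝ)^2+(d:ℝ)+2)*((i.val:ℝ)-(m:ℝ))^2) * ((j.val:ℝ)-((i.val:ℝ)+1))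
              + (-(m:ℝ)^2 + ((m:ℝ)-(c:ℝ)+3/2) + ((d:ℝ)^2+(d:ℝ)+2)*((j.val:ℝ)-(m:ℝ))^2) * (((i.val:ℝ)+1)-(i.val:ℝ))
              - (-(m:ℝ)^2 + ((m:ℝ)-(c:ℝ)+3/2) + ((d:ℝ)^2+(d:ℝ)+2)*(((i.val:ℝ)+1)-(m:ℝ))^2) * ((j.val:ℝ)-(i.val:ℝ))
            = ((d:ℝ)^2+(d:ℝ)+2) * (((j.val:ℝ)-((i.val:ℝ)+1)) * ((j.val:ℝ)-(i.val:ℝ))) := by ring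
          linarith [hspec, hid, mul_pos hKpos (mul_pos
            (show (0:ℝ) < (j.val:ℝ)-((i.val:ℝ)+1) by linarith)
            (show (0:ℝ) < (j.val:ℝ)-(i.val:ℝ) by linarith))]
  · intro hQ q hiq hqj
    rcases hQ with h | ⟨h2, h3⟩ | ⟨h4, h5⟩
    · -- all head
      rw [him i (by omega), him q (by omega), him j (by omega)]
      have c1 : (i.val:ℝ) < q.val := by exact_mod_cast hiq
      have c2 : (q.val:ℝ) < j.val := by exact_mod_cast hqj
      nlinarith [mul_pos (mul_pos (sub_pos.2 c1) (sub_pos.2 c2)) (sub_pos.2 (c1.trans c2))]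
    · rcases h3 with h3 | h3
      · -- j = m, i+1 < c, q head
        rw [him i (by omega), him q (by omega), him2 j (by omega)]
        have e1 : ((j.val:ℝ)) = (m:ℝ) := by exact_mod_cast h2
        rw [e1]
        have c1 : (i.val:ℝ) + 1 ≤ q.val := by exact_mod_cast hiq
        have c2 : (q.val:ℝ) + 1 ≤ m := by exact_mod_cast (by omega : q.val + 1 ≤ m)
        have c3 : (i.val:ℝ) + 2 ≤ c := by exact_mod_cast h3
        have c4 : (c:ℝ) ≤ m := by exact_mod_cast hcm
        nlinarith [mul_pos (sub_pos.2 (show (i.val:ℝ) < q.val by linarith))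
            (sub_pos.2 (show (q.val:ℝ) < m by linarith)),
          mul_nonneg (sub_nonneg.2 (show (1:ℝ) ≤ (m:ℝ) - q.val by linarith))
            (sub_nonneg.2 (show (i.val:ℝ) ≤ q.val by linarith))]
      · omega
    · omega

/-! ### Counting -/

lemma fiber_card' (d m c j : ℕ) (hm1 : 1 ≤ m) (hmd : m + 1 ≤ d)
    (hc1 : 1 ≤ c) (hcm : c ≤ m) (hj : j < d) :
    ((Finset.range d).filter (fun a => a < j ∧ Qn m c a j)).card
      = if j < m then j else if j = m then c else 1 := by
  rcases lt_trichotomy j m with h | h | h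
  · rw [if_pos h]
    have : (Finset.range d).filter (fun a => a < j ∧ Qn m c a j) = Finset.range j := by
      ext x; simp only [Finset.mem_filter, Finset.mem_range]; simp only [Qn]; omega
    rw [this, Finset.card_range]
  · rw [if_neg (by omega), if_pos h]
    have : (Finset.range d).filter (fun a => a < j ∧ Qn m c a j)
        = insert (m-1) (Finset.range (c-1)) := by
      ext x; simp only [Finset.mem_filter, Finset.mem_range, Finset.mem_insert]; simp only [Qn]; omega
    rw [this, Finset.card_insert_of_notMem (by simp only [Finset.mem_range]; omega), Finset.card_range]
    omega
  · rw [if_neg (by omega), if_neg (by omega)]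
    have : (Finset.range d).filter (fun a => a < j ∧ Qn m c a j) = {j - 1} := by
      ext x; simp only [Finset.mem_filter, Finset.mem_range, Finset.mem_singleton]; simp only [Qn]; omega
    rw [this, Finset.card_singleton]

lemma total_card' (d m c : ℕ) (hm1 : 1 ≤ m) (hmd : m + 1 ≤ d)
    (hc1 : 1 ≤ c) (hcm : c ≤ m) :
    ((Finset.range d ×ˢ Finset.range d).filter (fun p => p.1 < p.2 ∧ Qn m c p.1 p.2)).card
      = (∑ j ∈ Finset.range m, j) + c + (d - 1 - m) := by
  rw [Finset.card_eq_sum_card_fiberwise (f := Prod.snd) (t := Finset.range d)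
    (by intro p hp; simp only [Finset.mem_coe, Finset.mem_filter, Finset.mem_product] at hp; exact hp.1.2)]
  have hstep : ∀ j ∈ Finset.range d,
      (((Finset.range d ×ˢ Finset.range d).filter
          (fun p => p.1 < p.2 ∧ Qn m c p.1 p.2)).filter (fun p => p.2 = j)).card
        = if j < m then j else if j = m then c else 1 := by
    intro j hj
    rw [← fiber_card' d m c j hm1 hmd hc1 hcm (Finset.mem_range.1 hj)]
    apply Finset.card_bij' (fun (p : ℕ × ℕ) _ => p.1) (fun a _ => (a, j))
    · intro p hp
      simp only [Finset.mem_filter, Finset.mem_product, Finset.mem_range] at hp ⊢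
      obtain ⟨⟨⟨hp1, hp2⟩, hlt, hq⟩, hpj⟩ := hp
      subst hpj
      exact ⟨hp1, hlt, hq⟩
    · intro a ha
      simp only [Finset.mem_filter, Finset.mem_range, Finset.mem_product] at ha ⊢
      exact ⟨⟨⟨ha.1, Finset.mem_range.1 hj⟩, ha.2.1, ha.2.2⟩, trivial⟩
    · intro p hp
      simp only [Finset.mem_filter] at hp
      rw [← hp.2]
    · intro a ha
      rfl
  rw [Finset.sum_congr rfl hstep]
  have hsplit : Finset.range d = Finset.range (m+1) ∪ Finset.Ico (m+1) d := by
    rw [Finset.range_eq_Ico, Finset.range_eq_Ico]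
    exact (Finset.Ico_union_Ico_eq_Ico (a := 0) (b := m+1) (c := d) (by omega) (by omega)).symm
  rw [hsplit, Finset.sum_union (by
    simp only [Finset.disjoint_left, Finset.mem_range, Finset.mem_Ico]
    omega)]
  have e1 : ∑ j ∈ Finset.range (m+1), (if j < m then j else if j = m then c else 1)
      = (∑ j ∈ Finset.range m, j) + c := by
    rw [Finset.sum_range_succ, if_neg (lt_irrefl m), if_pos rfl]
    congr 1
    apply Finset.sum_congr rfl
    intro x hx
    rw [if_pos (Finset.mem_range.1 hx)]
  have e2 : ∑ j ∈ Finset.Ico (m+1) d, (if j < m then j else if j = m then c else 1)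
      = d - 1 - m := by
    have : ∑ j ∈ Finset.Ico (m+1) d, (if j < m then j else if j = m then c else 1)
        = ∑ _j ∈ Finset.Ico (m+1) d, 1 := by
      apply Finset.sum_congr rfl
      intro x hx
      have := Finset.mem_Ico.1 hx
      rw [if_neg (by omega), if_neg (by omega)]
    rw [this, Finset.sum_const, smul_eq_mul, mul_one, Nat.card_Ico]
    omega
  rw [e1, e2]

lemma yy_inj (d m c : ℕ) (hd : 2 ≤ d) (hm1 : 1 ≤ m) (hmd : m + 1 ≤ d)
    (hc1 : 1 ≤ c) (hcm : c ≤ m) {a b : ℕ} (ha : a < d) (hb : b < d) (hab : a < b) :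
    yy m c ((d:ℝ)^2+(d:ℝ)+2) a ≠ yy m c ((d:ℝ)^2+(d:ℝ)+2) b := by
  intro heq
  have cab : (a:ℝ) < b := by exact_mod_cast hab
  by_cases h1 : b < m
  · rw [yy, yy, if_pos (by omega), if_pos h1] at heq
    have : (0:ℝ) ≤ a := Nat.cast_nonneg a
    nlinarith [heq]
  · by_cases h2 : a < m
    · by_cases h3 : b = m
      · rw [yy, yy, if_pos h2, if_neg (by omega)] at heq
        have e1 : ((b:ℝ)) = (m:ℝ) := by exact_mod_cast h3
        rw [e1] at heq
        have hr : 2*(m:ℝ)^2 + 2*(c:ℝ) = 2*(a:ℝ)^2 + 2*(m:ℝ) + 3 := by nlinarith [heq]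
        have heq3 : (2*m^2 + 2*c : ℕ) = (2*a^2 + 2*m + 3 : ℕ) := by exact_mod_cast hr
        obtain ⟨A, hA⟩ : ∃ A, a^2 = A := ⟨_, rfl⟩
        obtain ⟨M, hM⟩ : ∃ M, m^2 = M := ⟨_, rfl⟩
        rw [hA, hM] at heq3
        omega
      · -- a < m < b : tail value is positive, head value ≤ 0
        rw [yy, yy, if_pos h2, if_neg (by omega)] at heq
        have c1 : (m:ℝ) + 1 ≤ b := by exact_mod_cast (by omega : m + 1 ≤ b)
        have c2 : (m:ℝ) + 1 ≤ d := by exact_mod_cast hmd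
        have c3 : (c:ℝ) ≤ m := by exact_mod_cast hcm
        have h0 : (0:ℝ) ≤ a := Nat.cast_nonneg a
        have hsq : (1:ℝ) ≤ ((b:ℝ) - m)^2 := by nlinarith
        nlinarith [heq, sq_nonneg ((a:ℝ))]
    · -- m ≤ a < b : strictly increasing on tail
      rw [yy, yy, if_neg h2, if_neg (by omega)] at heq
      have c1 : (m:ℝ) ≤ a := by exact_mod_cast (by omega : m ≤ a)
      have hKpos : (0:ℝ) < (d:ℝ)^2+(d:ℝ)+2 := by positivity
      have hlt : ((a:ℝ)-(m:ℝ))^2 < ((b:ℝ)-(m:ℝ))^2 := by nlinarith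
      nlinarith [heq, mul_lt_mul_of_pos_left hlt hKpos]

/-- For every `d ≥ 2` and every `k` with `d - 1 ≤ k ≤ d(d-1)/2` there is a chopped
vertical strip on `d` nodes with exactly `k` visible pairs. -/
theorem stmt0 (d k : ℕ) (hd : 2 ≤ d) (hk1 : d - 1 ≤ k) (hk2 : k ≤ d * (d - 1) / 2) :
    ∃ (z : Fin d → ℂ) (dir : Fin d → Bool),
      StrictMono (fun i => (z i).re) ∧
      Function.Injective (fun i => (z i).im) ∧
      visibleCount d z dir = k := by
  -- choose m and c
  have hGd : ∑ j ∈ Finset.range d, j = d * (d-1) / 2 := Finset.sum_range_id d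
  have hPd : 1 ≤ d - 1 ∧ k ≤ (∑ j ∈ Finset.range (d-1), j) + (d-1) := by
    constructor
    · omega
    · have : ∑ j ∈ Finset.range d, j = (∑ j ∈ Finset.range (d-1), j) + (d-1) := by
        conv_lhs => rw [show d = (d-1) + 1 by omega]
        rw [Finset.sum_range_succ]
      omega
  have hPex : ∃ n, 1 ≤ n ∧ k ≤ (∑ j ∈ Finset.range n, j) + (d-1) := ⟨d-1, hPd⟩
  set m := Nat.find hPex with hm
  have hmspec := Nat.find_spec hPex
  have hm1 : 1 ≤ m := hmspec.1
  have hmd : m ≤ d - 1 := Nat.find_min' hPex hPd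
  set c := k - ((∑ j ∈ Finset.range m, j) + (d-1-m)) with hc
  have hkey : (∑ j ∈ Finset.range m, j) + c + (d - 1 - m) = k ∧ 1 ≤ c ∧ c ≤ m := by
    have hub : k ≤ (∑ j ∈ Finset.range m, j) + (d-1) := hmspec.2
    by_cases hm2 : m = 1
    · have h1 : (∑ j ∈ Finset.range m, j) = 0 := by rw [hm2]; simp
      rw [hc, h1]
      omega
    · have hmm : m - 1 < m := by omega
      have hnot := Nat.find_min hPex hmm
      push_neg at hnot
      have hlow : (∑ j ∈ Finset.range (m-1), j) + (d-1) < k := hnot (by omega)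
      have hGm : (∑ j ∈ Finset.range m, j) = (∑ j ∈ Finset.range (m-1), j) + (m-1) := by
        conv_lhs => rw [show m = (m-1) + 1 by omega]
        rw [Finset.sum_range_succ]
      rw [hc]
      omega
  obtain ⟨hsum, hc1, hcm⟩ := hkey
  have hmd' : m + 1 ≤ d := by omega
  refine ⟨zfun d m c, fun _ => true, ?_, ?_, ?_⟩
  · -- strict mono re
    intro a b hab
    simp only [zfun_re]
    exact_mod_cast (Fin.lt_def.1 hab)
  · -- injective im
    intro a b hab
    simp only [zfun_im] at hab
    by_contra hne
    have hvne : a.val ≠ b.val := fun h => hne (Fin.ext h)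
    rcases lt_or_gt_of_ne hvne with h | h
    · exact yy_inj d m c hd hm1 hmd' hc1 hcm a.isLt b.isLt h hab
    · exact yy_inj d m c hd hm1 hmd' hc1 hcm b.isLt a.isLt h hab.symm
  · -- count
    have hcongr : ∀ p : Fin d × Fin d,
        (p.1 < p.2 ∧ Visible d (zfun d m c) (fun _ => true) p.1 p.2)
          ↔ (p.1 < p.2 ∧ Qn m c p.1.val p.2.val) := by
      intro p
      constructor
      · rintro ⟨hlt, hv⟩
        exact ⟨hlt, (vis_iff_Q d m c hd hm1 hmd' hc1 hcm p.1 p.2 (Fin.lt_def.1 hlt)).1 hv⟩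
      · rintro ⟨hlt, hv⟩
        exact ⟨hlt, (vis_iff_Q d m c hd hm1 hmd' hc1 hcm p.1 p.2 (Fin.lt_def.1 hlt)).2 hv⟩
    rw [visibleCount]
    rw [Nat.card_congr (Equiv.subtypeEquivRight hcongr)]
    rw [Nat.card_eq_fintype_card, Fintype.card_subtype]
    have hbij : (Finset.univ.filter
          (fun p : Fin d × Fin d => p.1 < p.2 ∧ Qn m c p.1.val p.2.val)).card
        = ((Finset.range d ×ˢ Finset.range d).filter
            (fun p => p.1 < p.2 ∧ Qn m c p.1 p.2)).card := by
      have key : ∀ p : ℕ × ℕ, p ∈ (Finset.range d ×ˢ Finset.range d).filter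
          (fun p => p.1 < p.2 ∧ Qn m c p.1 p.2) → p.1 < d ∧ p.2 < d := by
        intro p hp
        simp only [Finset.mem_filter, Finset.mem_product, Finset.mem_range] at hp
        exact ⟨hp.1.1, hp.1.2⟩
      refine Finset.card_bij' (fun (p : Fin d × Fin d) _ => ((p.1.val : ℕ), (p.2.val : ℕ)))
        (fun p hp => (⟨p.1, (key p hp).1⟩, ⟨p.2, (key p hp).2⟩)) ?_ ?_ ?_ ?_
      · intro p hp
        simp only [Finset.mem_filter, Finset.mem_univ, true_and] at hp
        simp only [Finset.mem_filter, Finset.mem_product, Finset.mem_range]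
        exact ⟨⟨p.1.isLt, p.2.isLt⟩, Fin.lt_def.1 hp.1, hp.2⟩
      · intro p hp
        have hp' := hp
        simp only [Finset.mem_filter, Finset.mem_product, Finset.mem_range] at hp'
        simp only [Finset.mem_filter, Finset.mem_univ, true_and]
        exact ⟨Fin.lt_def.2 hp'.2.1, hp'.2.2⟩
      · intro p hp
        rfl
      · intro p hp
        rfl
    rw [hbij, total_card' d m c hm1 hmd' hc1 hcm]
    omega
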